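/- arXiv:1304.2444 — 3 statements merged into one kernel-verified Lean document; each statement's English description precedes it below -/
import Mathlib

section
/- Let X, Y be binary random variables with I(X ∧ Y) > 0, and let U₁, ..., U_r satisfy the interactive Markov conditions U_{2i+1} → (X, U^{2i}) → Y, U_{2i} → (Y, U^{2i-1}) → X, and X → U^r → Y. Then for every realization u^r of U^r with positive probability, either H(X | U^r = u^r) = 0 or H(Y | U^r = u^r) = 0. -/
open scoped Classical
open Finset Real

noncomputable section

variable {Ω : Type*} [Fintype Ω]

/-- Pushforward probability of value `x` under random variable `X` w.r.t. pmf `p`. -/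
def dist' {α : Type*} (p : Ω → ℝ) (X : Ω → α) (x : α) : ℝ :=
  ∑ ω, if X ω = x then p ω else 0

/-- Shannon entropy, base 2. -/
def ent {α : Type*} [Fintype α] (p : Ω → ℝ) (X : Ω → α) : ℝ :=
  -∑ x, dist' p X x * Real.logb 2 (dist' p X x)

/-- Conditional entropy `H(X | Y)`. -/
def condEnt {α β : Type*} [Fintype α] [Fintype β] (p : Ω → ℝ) (X : Ω → α) (Y : Ω → β) : ℝ :=
  ent p (fun ω => (X ω, Y ω)) - ent p Y

/-- Mutual information `I(X ∧ Y)`. -/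
def mi {α β : Type*} [Fintype α] [Fintype β] (p : Ω → ℝ) (X : Ω → α) (Y : Ω → β) : ℝ :=
  ent p X + ent p Y - ent p (fun ω => (X ω, Y ω))

/-- Conditional mutual information `I(X ∧ Y | Z)`. -/
def cmi {α β γ : Type*} [Fintype α] [Fintype β] [Fintype γ]
    (p : Ω → ℝ) (X : Ω → α) (Y : Ω → β) (Z : Ω → γ) : ℝ :=
  ent p (fun ω => (X ω, Z ω)) + ent p (fun ω => (Y ω, Z ω))
    - ent p (fun ω => ((X ω, Y ω), Z ω)) - ent p Z

/-- `p` is a probability mass function on `Ω`. -/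
def IsPMF (p : Ω → ℝ) : Prop := (∀ ω, 0 ≤ p ω) ∧ ∑ ω, p ω = 1

/-- The prefix `U^i = (U_1, ..., U_i)` of an interactive sequence. -/
def pre {𝒰 : Type*} {r : ℕ} (U : Fin r → Ω → 𝒰) (i : ℕ) (h : i ≤ r) :
    Ω → (Fin i → 𝒰) :=
  fun ω k => U (Fin.castLE h k) ω

/-- Condition (P1): interactive Markov conditions.  Index `j : Fin r` corresponds to the
`(j+1)`-st message; messages with odd 1-based index (`Even j.val`) are sent by terminal 𝒳. -/
def P1cond {𝒳 𝒴 𝒰 : Type*} [Fintype 𝒳] [Fintype 𝒴] [Fintype 𝒰] {r : ℕ}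
    (p : Ω → ℝ) (X : Ω → 𝒳) (Y : Ω → 𝒴) (U : Fin r → Ω → 𝒰) : Prop :=
  ∀ j : Fin r,
    (Even j.val → cmi p (U j) Y (fun ω => (X ω, pre U j.val j.isLt.le ω)) = 0) ∧
    (¬ Even j.val → cmi p (U j) X (fun ω => (Y ω, pre U j.val j.isLt.le ω)) = 0)

/-- Condition (P2): `X -∘- U^r -∘- Y`. -/
def P2cond {𝒳 𝒴 𝒰 : Type*} [Fintype 𝒳] [Fintype 𝒴] [Fintype 𝒰] {r : ℕ}
    (p : Ω → ℝ) (X : Ω → 𝒳) (Y : Ω → 𝒴) (U : Fin r → Ω → 𝒰) : Prop :=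
  cmi p X Y (pre U r le_rfl) = 0

/-- The conditional pmf on `Ω` given the event `A = u`. -/
def condPMF {α : Type*} (p : Ω → ℝ) (A : Ω → α) (u : α) : Ω → ℝ :=
  fun ω => if A ω = u then p ω / dist' p A u else 0

lemma dist'_nonneg {α : Type*} {p : Ω → ℝ} (hp : ∀ ω, 0 ≤ p ω) (A : Ω → α) (a : α) :
    0 ≤ dist' p A a := by
  unfold dist'
  exact Finset.sum_nonneg fun ω _ => by split <;> simp [hp ω]

lemma sum_push {α : Type*} [Fintype α] (p : Ω → ℝ) (A : Ω → α) (g : α → ℝ) :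
    ∑ a, dist' p A a * g a = ∑ ω, p ω * g (A ω) := by
  unfold dist'
  calc ∑ a, (∑ ω, if A ω = a then p ω else 0) * g a
      = ∑ a, ∑ ω, (if A ω = a then p ω * g a else 0) := by
        refine Finset.sum_congr rfl fun a _ => ?_
        rw [Finset.sum_mul]
        exact Finset.sum_congr rfl fun ω _ => by split <;> simp
    _ = ∑ ω, ∑ a, (if A ω = a then p ω * g a else 0) := Finset.sum_comm
    _ = ∑ ω, p ω * g (A ω) := Finset.sum_congr rfl fun ω _ => by simp

lemma sum_dist' {α : Type*} [Fintype α] (p : Ω → ℝ) (A : Ω → α) :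
    ∑ a, dist' p A a = ∑ ω, p ω := by
  simpa using sum_push p A fun _ => 1

lemma ent_eq {α : Type*} [Fintype α] (p : Ω → ℝ) (A : Ω → α) :
    ent p A = -∑ ω, p ω * Real.logb 2 (dist' p A (A ω)) := by
  unfold ent; rw [sum_push]

lemma le_dist'_apply {α : Type*} {p : Ω → ℝ} (hp : ∀ ω, 0 ≤ p ω) (A : Ω → α) (ω₀ : Ω) :
    p ω₀ ≤ dist' p A (A ω₀) := by
  unfold dist'
  have h := Finset.single_le_sum (f := fun ω => if A ω = A ω₀ then p ω else 0)
    (fun ω _ => by split <;> simp [hp ω]) (Finset.mem_univ ω₀)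
  simpa using h

lemma dist'_mono {α β : Type*} {p : Ω → ℝ} (hp : ∀ ω, 0 ≤ p ω) {A : Ω → α} {B : Ω → β}
    {a : α} {b : β} (h : ∀ ω, A ω = a → B ω = b) : dist' p A a ≤ dist' p B b := by
  unfold dist'
  refine Finset.sum_le_sum fun ω _ => ?_
  by_cases hA : A ω = a
  · simp [hA, h ω hA]
  · simp only [hA, if_false]
    split <;> simp [hp ω]

lemma dist'_congr {α β : Type*} (p : Ω → ℝ) {A : Ω → α} {B : Ω → β} {a : α} {b : β}
    (h : ∀ ω, A ω = a ↔ B ω = b) : dist' p A a = dist' p B b := by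
  unfold dist'
  exact Finset.sum_congr rfl fun ω _ => by simp only [h ω]

lemma dist'_fst {α β : Type*} [Fintype β] (p : Ω → ℝ) (A : Ω → α) (B : Ω → β) (a : α) :
    ∑ b, dist' p (fun ω => (A ω, B ω)) (a, b) = dist' p A a := by
  unfold dist'
  rw [Finset.sum_comm]
  refine Finset.sum_congr rfl fun ω _ => ?_
  by_cases h : A ω = a
  · simp [Prod.ext_iff, h]
  · simp [Prod.ext_iff, h]

lemma dist'_snd {α β : Type*} [Fintype α] (p : Ω → ℝ) (A : Ω → α) (B : Ω → β) (b : β) :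
    ∑ a, dist' p (fun ω => (A ω, B ω)) (a, b) = dist' p B b := by
  unfold dist'
  rw [Finset.sum_comm]
  refine Finset.sum_congr rfl fun ω _ => ?_
  by_cases h : B ω = b
  · simp [Prod.ext_iff, h]
  · simp [Prod.ext_iff, h]

lemma gibbs_aux {ι : Type*} [Fintype ι] (ρ σ : ι → ℝ)
    (hρ : ∀ i, 0 ≤ ρ i) (hσ : ∀ i, 0 ≤ σ i)
    (hσs : ∑ i, σ i ≤ ∑ i, ρ i)
    (hpos : ∀ i, ρ i ≠ 0 → 0 < σ i)
    (hsum : ∑ i, ρ i * Real.log (ρ i / σ i) = 0) :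
    ∀ i, ρ i = σ i := by
  have hle : ∀ i, ρ i - σ i ≤ ρ i * Real.log (ρ i / σ i) := by
    intro i
    by_cases h0 : ρ i = 0
    · simp only [h0, zero_mul, zero_sub]
      linarith [hσ i]
    · have hρi : 0 < ρ i := (hρ i).lt_of_ne' h0
      have hσi := hpos i h0
      have hx : 0 < σ i / ρ i := by positivity
      have h1 := Real.log_le_sub_one_of_pos hx
      rw [Real.log_div hσi.ne' hρi.ne'] at h1
      rw [Real.log_div h0 hσi.ne']
      have h2 : ρ i * (1 - σ i / ρ i) ≤ ρ i * (Real.log (ρ i) - Real.log (σ i)) :=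
        mul_le_mul_of_nonneg_left (by linarith) hρi.le
      have h3 : ρ i * (1 - σ i / ρ i) = ρ i - σ i := by field_simp
      linarith
  have hs1 : ∑ i, (ρ i - σ i) = ∑ i, ρ i - ∑ i, σ i := Finset.sum_sub_distrib ρ σ
  have hs2 : (0:ℝ) ≤ ∑ i, (ρ i - σ i) := by rw [hs1]; linarith
  have hs3 : ∑ i, (ρ i - σ i) ≤ ∑ i, ρ i * Real.log (ρ i / σ i) :=
    Finset.sum_le_sum fun i _ => hle i
  have hs4 : ∑ i, (ρ i - σ i) = ∑ i, ρ i * Real.log (ρ i / σ i) := by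
    apply le_antisymm hs3; rw [hsum]; exact hs2
  have heq := (Finset.sum_eq_sum_iff_of_le fun i _ => hle i).mp hs4
  intro i
  have heqi := heq i (Finset.mem_univ i)
  by_cases h0 : ρ i = 0
  · rw [h0, zero_mul, zero_sub, neg_eq_zero] at heqi
    rw [h0, heqi]
  · have hρi : 0 < ρ i := (hρ i).lt_of_ne' h0
    have hσi := hpos i h0
    by_contra hne
    have hx : 0 < σ i / ρ i := by positivity
    have hx1 : σ i / ρ i ≠ 1 := by
      intro hh
      apply hne
      field_simp at hh
      linarith
    have h1 := Real.log_lt_sub_one_of_pos hx hx1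
    rw [Real.log_div hσi.ne' hρi.ne'] at h1
    rw [Real.log_div h0 hσi.ne'] at heqi
    have h2 : ρ i * (Real.log (σ i) - Real.log (ρ i)) < ρ i * (σ i / ρ i - 1) :=
      mul_lt_mul_of_pos_left h1 hρi
    have h3 : ρ i * (σ i / ρ i) = σ i := by field_simp
    nlinarith

lemma condIndep_of_cmi_eq_zero {α β γ : Type*} [Fintype α] [Fintype β] [Fintype γ]
    (p : Ω → ℝ) (hp : IsPMF p) (A : Ω → α) (B : Ω → β) (C : Ω → γ)
    (h : cmi p A B C = 0) (a : α) (b : β) (c : γ) :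
    dist' p (fun ω => ((A ω, B ω), C ω)) ((a, b), c) * dist' p C c =
      dist' p (fun ω => (A ω, C ω)) (a, c) * dist' p (fun ω => (B ω, C ω)) (b, c) := by
  obtain ⟨hp0, hp1⟩ := hp
  have hl2 : (0:ℝ) < Real.log 2 := Real.log_pos (by norm_num)
  have hρnn : ∀ x : (α × β) × γ, 0 ≤ dist' p (fun ω => ((A ω, B ω), C ω)) x :=
    fun x => dist'_nonneg hp0 _ x
  have hσnn : ∀ x : (α × β) × γ, 0 ≤ (if dist' p C x.2 = 0 then 0 else
      dist' p (fun ω => (A ω, C ω)) (x.1.1, x.2) *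
        dist' p (fun ω => (B ω, C ω)) (x.1.2, x.2) / dist' p C x.2) := by
    intro x
    split
    · exact le_rfl
    · exact div_nonneg (mul_nonneg (dist'_nonneg hp0 _ _) (dist'_nonneg hp0 _ _))
        (dist'_nonneg hp0 _ _)
  have hσs : (∑ x : (α × β) × γ, if dist' p C x.2 = 0 then 0 else
      dist' p (fun ω => (A ω, C ω)) (x.1.1, x.2) *
        dist' p (fun ω => (B ω, C ω)) (x.1.2, x.2) / dist' p C x.2) ≤
      ∑ x : (α × β) × γ, dist' p (fun ω => ((A ω, B ω), C ω)) x := by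
    rw [sum_dist' p (fun ω => ((A ω, B ω), C ω)), ← sum_dist' p C]
    have e : (∑ x : (α × β) × γ, if dist' p C x.2 = 0 then 0 else
        dist' p (fun ω => (A ω, C ω)) (x.1.1, x.2) *
          dist' p (fun ω => (B ω, C ω)) (x.1.2, x.2) / dist' p C x.2) =
        ∑ c' : γ, ∑ y : α × β, (if dist' p C c' = 0 then 0 else
          dist' p (fun ω => (A ω, C ω)) (y.1, c') *
            dist' p (fun ω => (B ω, C ω)) (y.2, c') / dist' p C c') := by
      rw [Fintype.sum_prod_type, Finset.sum_comm]
    rw [e]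
    refine Finset.sum_le_sum fun c' _ => ?_
    by_cases hc : dist' p C c' = 0
    · simp only [if_pos hc, Finset.sum_const_zero]
      exact dist'_nonneg hp0 C c'
    · simp only [if_neg hc]
      rw [show (∑ y : α × β, dist' p (fun ω => (A ω, C ω)) (y.1, c') *
            dist' p (fun ω => (B ω, C ω)) (y.2, c') / dist' p C c') =
          (∑ a', dist' p (fun ω => (A ω, C ω)) (a', c')) *
            (∑ b', dist' p (fun ω => (B ω, C ω)) (b', c')) / dist' p C c' from ?_]
      · rw [dist'_snd p A C c', dist'_snd p B C c', mul_div_assoc, div_self hc, mul_one]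
      · rw [Finset.sum_mul_sum]
        simp only [Finset.sum_div]
        rw [Fintype.sum_prod_type]
  have hpos : ∀ x : (α × β) × γ, dist' p (fun ω => ((A ω, B ω), C ω)) x ≠ 0 →
      0 < (if dist' p C x.2 = 0 then 0 else
        dist' p (fun ω => (A ω, C ω)) (x.1.1, x.2) *
          dist' p (fun ω => (B ω, C ω)) (x.1.2, x.2) / dist' p C x.2) := by
    intro x hx
    have hρpos : 0 < dist' p (fun ω => ((A ω, B ω), C ω)) x := (hρnn x).lt_of_ne' hx
    have hC : 0 < dist' p C x.2 :=
      lt_of_lt_of_le hρpos (dist'_mono hp0 fun ω hω => by rw [← hω])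
    have hAC : 0 < dist' p (fun ω => (A ω, C ω)) (x.1.1, x.2) :=
      lt_of_lt_of_le hρpos (dist'_mono hp0 fun ω hω => by rw [← hω])
    have hBC : 0 < dist' p (fun ω => (B ω, C ω)) (x.1.2, x.2) :=
      lt_of_lt_of_le hρpos (dist'_mono hp0 fun ω hω => by rw [← hω])
    rw [if_neg hC.ne']
    positivity
  have hterm : ∀ ω : Ω, p ω * Real.log (dist' p (fun ω' => ((A ω', B ω'), C ω')) ((A ω, B ω), C ω) /
      (if dist' p C (C ω) = 0 then 0 else
        dist' p (fun ω' => (A ω', C ω')) (A ω, C ω) *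
          dist' p (fun ω' => (B ω', C ω')) (B ω, C ω) / dist' p C (C ω))) =
      (p ω * Real.logb 2 (dist' p (fun ω' => ((A ω', B ω'), C ω')) ((A ω, B ω), C ω))
        + p ω * Real.logb 2 (dist' p C (C ω))
        - p ω * Real.logb 2 (dist' p (fun ω' => (A ω', C ω')) (A ω, C ω))
        - p ω * Real.logb 2 (dist' p (fun ω' => (B ω', C ω')) (B ω, C ω))) * Real.log 2 := by
    intro ω
    by_cases hω : p ω = 0
    · simp [hω]
    · have hpω : 0 < p ω := (hp0 ω).lt_of_ne' hω
      have hABC : 0 < dist' p (fun ω' => ((A ω', B ω'), C ω')) ((A ω, B ω), C ω) :=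
        lt_of_lt_of_le hpω (le_dist'_apply hp0 (fun ω' => ((A ω', B ω'), C ω')) ω)
      have hC : 0 < dist' p C (C ω) := lt_of_lt_of_le hpω (le_dist'_apply hp0 C ω)
      have hAC : 0 < dist' p (fun ω' => (A ω', C ω')) (A ω, C ω) :=
        lt_of_lt_of_le hpω (le_dist'_apply hp0 (fun ω' => (A ω', C ω')) ω)
      have hBC : 0 < dist' p (fun ω' => (B ω', C ω')) (B ω, C ω) :=
        lt_of_lt_of_le hpω (le_dist'_apply hp0 (fun ω' => (B ω', C ω')) ω)
      rw [if_neg hC.ne']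
      rw [Real.log_div hABC.ne' (by positivity)]
      rw [Real.log_div (mul_pos hAC hBC).ne' hC.ne']
      rw [Real.log_mul hAC.ne' hBC.ne']
      simp only [Real.logb]
      field_simp
      ring
  have hsum : ∑ x : (α × β) × γ, dist' p (fun ω => ((A ω, B ω), C ω)) x *
      Real.log (dist' p (fun ω => ((A ω, B ω), C ω)) x / (if dist' p C x.2 = 0 then 0 else
        dist' p (fun ω => (A ω, C ω)) (x.1.1, x.2) *
          dist' p (fun ω => (B ω, C ω)) (x.1.2, x.2) / dist' p C x.2)) = 0 := by
    rw [sum_push p (fun ω => ((A ω, B ω), C ω)) (fun x =>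
      Real.log (dist' p (fun ω => ((A ω, B ω), C ω)) x / (if dist' p C x.2 = 0 then 0 else
        dist' p (fun ω => (A ω, C ω)) (x.1.1, x.2) *
          dist' p (fun ω => (B ω, C ω)) (x.1.2, x.2) / dist' p C x.2)))]
    have e1 : ∑ ω, p ω * Real.log (dist' p (fun ω' => ((A ω', B ω'), C ω')) ((A ω, B ω), C ω) /
        (if dist' p C (C ω) = 0 then 0 else
          dist' p (fun ω' => (A ω', C ω')) (A ω, C ω) *
            dist' p (fun ω' => (B ω', C ω')) (B ω, C ω) / dist' p C (C ω))) =
        ∑ ω, (p ω * Real.logb 2 (dist' p (fun ω' => ((A ω', B ω'), C ω')) ((A ω, B ω), C ω))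
          + p ω * Real.logb 2 (dist' p C (C ω))
          - p ω * Real.logb 2 (dist' p (fun ω' => (A ω', C ω')) (A ω, C ω))
          - p ω * Real.logb 2 (dist' p (fun ω' => (B ω', C ω')) (B ω, C ω))) * Real.log 2 :=
      Finset.sum_congr rfl fun ω _ => hterm ω
    rw [show (∑ ω, p ω * Real.log (dist' p (fun ω' => ((A ω', B ω'), C ω')) ((A ω, B ω), C ω) /
        (if dist' p C (C ω) = 0 then 0 else
          dist' p (fun ω' => (A ω', C ω')) (A ω, C ω) *
            dist' p (fun ω' => (B ω', C ω')) (B ω, C ω) / dist' p C (C ω)))) =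
        ∑ ω, (p ω * Real.logb 2 (dist' p (fun ω' => ((A ω', B ω'), C ω')) ((A ω, B ω), C ω))
          + p ω * Real.logb 2 (dist' p C (C ω))
          - p ω * Real.logb 2 (dist' p (fun ω' => (A ω', C ω')) (A ω, C ω))
          - p ω * Real.logb 2 (dist' p (fun ω' => (B ω', C ω')) (B ω, C ω))) * Real.log 2 from e1]
    have e2 : (∑ ω, (p ω * Real.logb 2 (dist' p (fun ω' => ((A ω', B ω'), C ω')) ((A ω, B ω), C ω))
          + p ω * Real.logb 2 (dist' p C (C ω))
          - p ω * Real.logb 2 (dist' p (fun ω' => (A ω', C ω')) (A ω, C ω))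
          - p ω * Real.logb 2 (dist' p (fun ω' => (B ω', C ω')) (B ω, C ω))) * Real.log 2) =
        cmi p A B C * Real.log 2 := by
      rw [← Finset.sum_mul, Finset.sum_sub_distrib, Finset.sum_sub_distrib,
        Finset.sum_add_distrib, cmi]
      simp only [ent_eq]
      ring
    rw [e2, h, zero_mul]
  have key := gibbs_aux (fun x : (α × β) × γ => dist' p (fun ω => ((A ω, B ω), C ω)) x)
    (fun x : (α × β) × γ => if dist' p C x.2 = 0 then 0 else
      dist' p (fun ω => (A ω, C ω)) (x.1.1, x.2) *
        dist' p (fun ω => (B ω, C ω)) (x.1.2, x.2) / dist' p C x.2)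
    hρnn hσnn hσs hpos hsum
  have hk : dist' p (fun ω => ((A ω, B ω), C ω)) ((a, b), c) =
      (if dist' p C c = 0 then 0 else
        dist' p (fun ω => (A ω, C ω)) (a, c) *
          dist' p (fun ω => (B ω, C ω)) (b, c) / dist' p C c) := key ((a, b), c)
  by_cases hc : dist' p C c = 0
  · have h0 : dist' p (fun ω => ((A ω, B ω), C ω)) ((a, b), c) = 0 := by rw [hk, if_pos hc]
    have hACle : dist' p (fun ω => (A ω, C ω)) (a, c) ≤ dist' p C c :=
      dist'_mono hp0 fun ω hω => congrArg Prod.snd hω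
    have hAC0 : dist' p (fun ω => (A ω, C ω)) (a, c) = 0 :=
      le_antisymm (by rw [← hc]; exact hACle) (dist'_nonneg hp0 _ _)
    rw [h0, hAC0, zero_mul, zero_mul]
  · rw [hk, if_neg hc]
    field_simp

lemma mi_eq_zero_of_indep {α β : Type*} [Fintype α] [Fintype β] (p : Ω → ℝ) (hp : IsPMF p)
    (A : Ω → α) (B : Ω → β)
    (h : ∀ a b, dist' p (fun ω => (A ω, B ω)) (a, b) = dist' p A a * dist' p B b) :
    mi p A B = 0 := by
  obtain ⟨hp0, hp1⟩ := hp
  have hA : ∑ a, dist' p A a = 1 := by rw [sum_dist', hp1]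
  have hB : ∑ b, dist' p B b = 1 := by rw [sum_dist', hp1]
  have e1 : ∀ a b, dist' p (fun ω => (A ω, B ω)) (a, b) *
      Real.logb 2 (dist' p (fun ω => (A ω, B ω)) (a, b)) =
      dist' p A a * (dist' p B b * Real.logb 2 (dist' p A a)) +
      dist' p B b * (dist' p A a * Real.logb 2 (dist' p B b)) := by
    intro a b
    rw [h a b]
    by_cases ha : dist' p A a = 0
    · simp [ha]
    · by_cases hb : dist' p B b = 0
      · simp [hb]
      · rw [Real.logb_mul ha hb]; ring
  have hAB : ent p (fun ω => (A ω, B ω)) = ent p A + ent p B := by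
    unfold ent
    rw [Fintype.sum_prod_type]
    rw [show (∑ a, ∑ b, dist' p (fun ω => (A ω, B ω)) (a, b) *
        Real.logb 2 (dist' p (fun ω => (A ω, B ω)) (a, b))) =
        ∑ a, ∑ b, (dist' p A a * (dist' p B b * Real.logb 2 (dist' p A a)) +
          dist' p B b * (dist' p A a * Real.logb 2 (dist' p B b))) from
      Finset.sum_congr rfl fun a _ => Finset.sum_congr rfl fun b _ => e1 a b]
    have e2 : ∀ a, (∑ b, (dist' p A a * (dist' p B b * Real.logb 2 (dist' p A a)) +
        dist' p B b * (dist' p A a * Real.logb 2 (dist' p B b)))) =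
        dist' p A a * Real.logb 2 (dist' p A a) +
        dist' p A a * ∑ b, dist' p B b * Real.logb 2 (dist' p B b) := by
      intro a
      rw [Finset.sum_add_distrib]
      congr 1
      · rw [← Finset.mul_sum]
        rw [show (∑ b, dist' p B b * Real.logb 2 (dist' p A a)) =
            (∑ b, dist' p B b) * Real.logb 2 (dist' p A a) from (Finset.sum_mul _ _ _).symm]
        rw [hB, one_mul]
      · rw [Finset.mul_sum]
        exact Finset.sum_congr rfl fun b _ => by ring
    rw [show (∑ a, ∑ b, (dist' p A a * (dist' p B b * Real.logb 2 (dist' p A a)) +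
        dist' p B b * (dist' p A a * Real.logb 2 (dist' p B b)))) =
        ∑ a, (dist' p A a * Real.logb 2 (dist' p A a) +
          dist' p A a * ∑ b, dist' p B b * Real.logb 2 (dist' p B b)) from
      Finset.sum_congr rfl fun a _ => e2 a]
    rw [Finset.sum_add_distrib]
    rw [show (∑ a, dist' p A a * ∑ b, dist' p B b * Real.logb 2 (dist' p B b)) =
        (∑ a, dist' p A a) * ∑ b, dist' p B b * Real.logb 2 (dist' p B b) from
      (Finset.sum_mul _ _ _).symm]
    rw [hA, one_mul]
    ring
  unfold mi
  rw [hAB]; ring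

lemma sum_condPMF {β : Type*} (p : Ω → ℝ) (B : Ω → β) (u : β) (hB : dist' p B u ≠ 0) :
    ∑ ω, condPMF p B u ω = 1 := by
  unfold condPMF
  have e : ∑ ω, (if B ω = u then p ω / dist' p B u else 0)
      = (∑ ω, if B ω = u then p ω else 0) / dist' p B u := by
    rw [Finset.sum_div]
    exact Finset.sum_congr rfl fun ω _ => by split <;> simp
  rw [e]
  exact div_self hB

lemma dist'_condPMF {α β : Type*} (p : Ω → ℝ) (A : Ω → α) (B : Ω → β) (u : β) (a : α) :
    dist' (condPMF p B u) A a = dist' p (fun ω => (A ω, B ω)) (a, u) / dist' p B u := by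
  unfold condPMF dist'
  rw [Finset.sum_div]
  refine Finset.sum_congr rfl fun ω _ => ?_
  by_cases h1 : A ω = a <;> by_cases h2 : B ω = u <;> simp [h1, h2, Prod.ext_iff]

lemma ent_fin2_eq_zero (q : Ω → ℝ) (A : Ω → Fin 2)
    (hsum : ∑ x, dist' q A x = 1) (x0 : Fin 2) (h0 : dist' q A x0 = 0) :
    ent q A = 0 := by
  unfold ent
  rw [Fin.sum_univ_two] at hsum ⊢
  have hx : x0 = 0 ∨ x0 = 1 := by fin_cases x0 <;> [exact Or.inl rfl; exact Or.inr rfl]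
  rcases hx with hx | hx <;> subst hx
  · have h1 : dist' q A 1 = 1 := by linarith
    rw [h0, h1]; simp
  · have h1 : dist' q A 0 = 1 := by linarith
    rw [h0, h1]; simp

lemma rect {𝒰 : Type*} [Fintype 𝒰] {r : ℕ} (p : Ω → ℝ) (hp : IsPMF p)
    (X Y : Ω → Fin 2) (U : Fin r → Ω → 𝒰) (h1 : P1cond p X Y U) :
    ∀ (i : ℕ) (h : i ≤ r) (u : Fin i → 𝒰), ∃ f g : Fin 2 → ℝ,
      ∀ x y, dist' p (fun ω => ((X ω, Y ω), pre U i h ω)) ((x, y), u) =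
        dist' p (fun ω => (X ω, Y ω)) (x, y) * f x * g y := by
  have hp0 := hp.1
  intro i
  induction i with
  | zero =>
    intro h u
    refine ⟨fun _ => 1, fun _ => 1, fun x y => ?_⟩
    rw [mul_one, mul_one]
    refine dist'_congr p fun ω => ?_
    have h0 : pre U 0 h ω = u := Subsingleton.elim _ _
    simp [Prod.ext_iff, h0]
  | succ i ih =>
    intro h u
    have hi : i < r := lt_of_lt_of_le (Nat.lt_succ_self i) h
    have h' : i ≤ r := hi.le
    obtain ⟨f, g, hfg⟩ := ih h' (fun k => u k.castSucc)
    have hpre : ∀ ω, pre U (i+1) h ω = u ↔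
        (pre U i h' ω = (fun k => u k.castSucc) ∧ U ⟨i, hi⟩ ω = u (Fin.last i)) := by
      intro ω
      constructor
      · intro he
        exact ⟨funext fun k => congrFun he k.castSucc, congrFun he (Fin.last i)⟩
      · rintro ⟨ha, hb⟩
        funext k
        refine Fin.lastCases ?_ ?_ k
        · exact hb
        · intro k'
          exact congrFun ha k'
    by_cases hev : Even i
    · -- terminal X sends message i+1
      have hci := condIndep_of_cmi_eq_zero p hp (U ⟨i, hi⟩) Y
        (fun ω => (X ω, pre U i h' ω)) ((h1 ⟨i, hi⟩).1 hev)
      refine ⟨fun x => if dist' p (fun ω => (X ω, pre U i h' ω)) (x, fun k => u k.castSucc) = 0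
          then 0 else f x *
            (dist' p (fun ω => (U ⟨i, hi⟩ ω, (X ω, pre U i h' ω)))
              (u (Fin.last i), (x, fun k => u k.castSucc)) /
             dist' p (fun ω => (X ω, pre U i h' ω)) (x, fun k => u k.castSucc)), g, ?_⟩
      intro x y
      beta_reduce
      by_cases hD : dist' p (fun ω => (X ω, pre U i h' ω)) (x, fun k => u k.castSucc) = 0
      · rw [if_pos hD, mul_zero, zero_mul]
        have hle : dist' p (fun ω => ((X ω, Y ω), pre U (i+1) h ω)) ((x, y), u) ≤
            dist' p (fun ω => (X ω, pre U i h' ω)) (x, fun k => u k.castSucc) := by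
          refine dist'_mono hp0 fun ω hω => ?_
          have e1 : X ω = x := congrArg (fun z => z.1.1) hω
          have e2 : pre U (i+1) h ω = u := congrArg Prod.snd hω
          have e3 := ((hpre ω).mp e2).1
          rw [Prod.ext_iff]
          exact ⟨e1, e3⟩
        have := dist'_nonneg hp0 (fun ω => ((X ω, Y ω), pre U (i+1) h ω)) ((x, y), u)
        linarith [hD ▸ hle]
      · rw [if_neg hD]
        have hc := hci (u (Fin.last i)) y (x, fun k => u k.castSucc)
        have e1 : dist' p (fun ω => ((U ⟨i, hi⟩ ω, Y ω), (X ω, pre U i h' ω)))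
            ((u (Fin.last i), y), (x, fun k => u k.castSucc)) =
            dist' p (fun ω => ((X ω, Y ω), pre U (i+1) h ω)) ((x, y), u) := by
          refine dist'_congr p fun ω => ?_
          simp only [Prod.mk.injEq, hpre ω]
          tauto
        have e2 : dist' p (fun ω => (Y ω, (X ω, pre U i h' ω)))
            (y, (x, fun k => u k.castSucc)) =
            dist' p (fun ω => ((X ω, Y ω), pre U i h' ω)) ((x, y), fun k => u k.castSucc) := by
          refine dist'_congr p fun ω => ?_
          simp only [Prod.mk.injEq]
          tauto
        rw [e1, e2, hfg x y] at hc
        field_simp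
        linear_combination hc
    · -- terminal Y sends message i+1
      have hci := condIndep_of_cmi_eq_zero p hp (U ⟨i, hi⟩) X
        (fun ω => (Y ω, pre U i h' ω)) ((h1 ⟨i, hi⟩).2 hev)
      refine ⟨f, fun y => if dist' p (fun ω => (Y ω, pre U i h' ω)) (y, fun k => u k.castSucc) = 0
          then 0 else g y *
            (dist' p (fun ω => (U ⟨i, hi⟩ ω, (Y ω, pre U i h' ω)))
              (u (Fin.last i), (y, fun k => u k.castSucc)) /
             dist' p (fun ω => (Y ω, pre U i h' ω)) (y, fun k => u k.castSucc)), ?_⟩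
      intro x y
      beta_reduce
      by_cases hD : dist' p (fun ω => (Y ω, pre U i h' ω)) (y, fun k => u k.castSucc) = 0
      · rw [if_pos hD, mul_zero]
        have hle : dist' p (fun ω => ((X ω, Y ω), pre U (i+1) h ω)) ((x, y), u) ≤
            dist' p (fun ω => (Y ω, pre U i h' ω)) (y, fun k => u k.castSucc) := by
          refine dist'_mono hp0 fun ω hω => ?_
          have e1 : Y ω = y := congrArg (fun z => z.1.2) hω
          have e2 : pre U (i+1) h ω = u := congrArg Prod.snd hω
          have e3 := ((hpre ω).mp e2).1
          rw [Prod.ext_iff]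
          exact ⟨e1, e3⟩
        have := dist'_nonneg hp0 (fun ω => ((X ω, Y ω), pre U (i+1) h ω)) ((x, y), u)
        linarith [hD ▸ hle]
      · rw [if_neg hD]
        have hc := hci (u (Fin.last i)) x (y, fun k => u k.castSucc)
        have e1 : dist' p (fun ω => ((U ⟨i, hi⟩ ω, X ω), (Y ω, pre U i h' ω)))
            ((u (Fin.last i), x), (y, fun k => u k.castSucc)) =
            dist' p (fun ω => ((X ω, Y ω), pre U (i+1) h ω)) ((x, y), u) := by
          refine dist'_congr p fun ω => ?_
          simp only [Prod.mk.injEq, hpre ω]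
          tauto
        have e2 : dist' p (fun ω => (X ω, (Y ω, pre U i h' ω)))
            (x, (y, fun k => u k.castSucc)) =
            dist' p (fun ω => ((X ω, Y ω), pre U i h' ω)) ((x, y), fun k => u k.castSucc) := by
          refine dist'_congr p fun ω => ?_
          simp only [Prod.mk.injEq]
          tauto
        rw [e1, e2, hfg x y] at hc
        field_simp
        linear_combination hc

/-- For binary `X, Y` with `I(X ∧ Y) > 0` and interactive `U^r`, every positive-probability
realization `u^r` satisfies `H(X | U^r = u^r) = 0` or `H(Y | U^r = u^r) = 0`. -/
theorem stmt13 {Ω 𝒰 : Type*} [Fintype Ω] [Fintype 𝒰] {r : ℕ}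
    (p : Ω → ℝ) (hp : IsPMF p) (X : Ω → Fin 2) (Y : Ω → Fin 2) (U : Fin r → Ω → 𝒰)
    (hI : 0 < mi p X Y)
    (h1 : P1cond p X Y U) (h2 : P2cond p X Y U) :
    ∀ u : Fin r → 𝒰, 0 < dist' p (pre U r le_rfl) u →
      ent (condPMF p (pre U r le_rfl) u) X = 0 ∨
      ent (condPMF p (pre U r le_rfl) u) Y = 0 := by
  intro u hu
  have hp0 := hp.1
  have hPUne : dist' p (pre U r le_rfl) u ≠ 0 := ne_of_gt hu
  have hqX : ∑ x, dist' (condPMF p (pre U r le_rfl) u) X x = 1 := by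
    rw [sum_dist']
    exact sum_condPMF p _ u hPUne
  have hqY : ∑ y, dist' (condPMF p (pre U r le_rfl) u) Y y = 1 := by
    rw [sum_dist']
    exact sum_condPMF p _ u hPUne
  by_cases hx : ∃ x, dist' p (fun ω => (X ω, pre U r le_rfl ω)) (x, u) = 0
  · obtain ⟨x0, hx0⟩ := hx
    left
    refine ent_fin2_eq_zero _ X hqX x0 ?_
    rw [dist'_condPMF, hx0, zero_div]
  by_cases hy : ∃ y, dist' p (fun ω => (Y ω, pre U r le_rfl ω)) (y, u) = 0
  · obtain ⟨y0, hy0⟩ := hy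
    right
    refine ent_fin2_eq_zero _ Y hqY y0 ?_
    rw [dist'_condPMF, hy0, zero_div]
  exfalso
  push_neg at hx hy
  obtain ⟨f, g, hfg⟩ := rect p hp X Y U h1 r le_rfl u
  have hci := condIndep_of_cmi_eq_zero p hp X Y (pre U r le_rfl) h2
  have key : ∀ x y, dist' p (fun ω => (X ω, Y ω)) (x, y) * f x * g y *
      dist' p (pre U r le_rfl) u =
      dist' p (fun ω => (X ω, pre U r le_rfl ω)) (x, u) *
        dist' p (fun ω => (Y ω, pre U r le_rfl ω)) (y, u) := by
    intro x y
    rw [← hfg x y]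
    exact hci x y u
  have hne : ∀ x y, dist' p (fun ω => (X ω, Y ω)) (x, y) * f x * g y *
      dist' p (pre U r le_rfl) u ≠ 0 := by
    intro x y
    rw [key x y]
    exact mul_ne_zero (hx x) (hy y)
  have hdet : dist' p (fun ω => (X ω, Y ω)) (0, 0) * dist' p (fun ω => (X ω, Y ω)) (1, 1) =
      dist' p (fun ω => (X ω, Y ω)) (0, 1) * dist' p (fun ω => (X ω, Y ω)) (1, 0) := by
    have e00 := key 0 0
    have e11 := key 1 1
    have e01 := key 0 1
    have e10 := key 1 0
    have hprod : (dist' p (fun ω => (X ω, Y ω)) (0, 0) * f 0 * g 0 * dist' p (pre U r le_rfl) u) *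
        (dist' p (fun ω => (X ω, Y ω)) (1, 1) * f 1 * g 1 * dist' p (pre U r le_rfl) u) =
        (dist' p (fun ω => (X ω, Y ω)) (0, 1) * f 0 * g 1 * dist' p (pre U r le_rfl) u) *
        (dist' p (fun ω => (X ω, Y ω)) (1, 0) * f 1 * g 0 * dist' p (pre U r le_rfl) u) := by
      rw [e00, e11, e01, e10]; ring
    have hfact : (dist' p (fun ω => (X ω, Y ω)) (0, 0) * dist' p (fun ω => (X ω, Y ω)) (1, 1) -
        dist' p (fun ω => (X ω, Y ω)) (0, 1) * dist' p (fun ω => (X ω, Y ω)) (1, 0)) *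
        (f 0 * f 1 * g 0 * g 1 * dist' p (pre U r le_rfl) u * dist' p (pre U r le_rfl) u) = 0 := by
      linear_combination hprod
    rcases mul_eq_zero.mp hfact with hz | hz
    · linarith [hz]
    · exfalso
      apply hne 0 0
      have hf0 : f 0 ≠ 0 ∧ f 1 ≠ 0 ∧ g 0 ≠ 0 ∧ g 1 ≠ 0 ∧ dist' p (pre U r le_rfl) u ≠ 0 := by
        refine ⟨?_, ?_, ?_, ?_, hPUne⟩ <;> intro hzz <;>
          [exact hne 0 0 (by rw [hzz]; ring); exact hne 1 0 (by rw [hzz]; ring);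
           exact hne 0 0 (by rw [hzz]; ring); exact hne 0 1 (by rw [hzz]; ring)]
      obtain ⟨hf0, hf1, hg0, hg1, hPU⟩ := hf0
      exact absurd hz (by positivity)
  have htot : dist' p (fun ω => (X ω, Y ω)) (0, 0) + dist' p (fun ω => (X ω, Y ω)) (0, 1) +
      (dist' p (fun ω => (X ω, Y ω)) (1, 0) + dist' p (fun ω => (X ω, Y ω)) (1, 1)) = 1 := by
    have := sum_dist' p (fun ω => (X ω, Y ω))
    rw [hp.2, Fintype.sum_prod_type, Fin.sum_univ_two] at this
    rw [Fin.sum_univ_two, Fin.sum_univ_two] at this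
    exact this
  have hmX : ∀ x, dist' p X x =
      dist' p (fun ω => (X ω, Y ω)) (x, 0) + dist' p (fun ω => (X ω, Y ω)) (x, 1) := by
    intro x
    rw [← dist'_fst p X Y x, Fin.sum_univ_two]
  have hmY : ∀ y, dist' p Y y =
      dist' p (fun ω => (X ω, Y ω)) (0, y) + dist' p (fun ω => (X ω, Y ω)) (1, y) := by
    intro y
    rw [← dist'_snd p X Y y, Fin.sum_univ_two]
  have hindep : ∀ x y, dist' p (fun ω => (X ω, Y ω)) (x, y) = dist' p X x * dist' p Y y := by
    intro x y
    rw [hmX x, hmY y]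
    have hx2 : x = 0 ∨ x = 1 := by fin_cases x <;> [exact Or.inl rfl; exact Or.inr rfl]
    have hy2 : y = 0 ∨ y = 1 := by fin_cases y <;> [exact Or.inl rfl; exact Or.inr rfl]
    rcases hx2 with hx2 | hx2 <;> rcases hy2 with hy2 | hy2 <;> subst hx2 <;> subst hy2
    · linear_combination (-(dist' p (fun ω => (X ω, Y ω)) (0, 0))) * htot + hdet
    · linear_combination (-(dist' p (fun ω => (X ω, Y ω)) (0, 1))) * htot - hdet
    · linear_combination (-(dist' p (fun ω => (X ω, Y ω)) (1, 0))) * htot - hdet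
    · linear_combination (-(dist' p (fun ω => (X ω, Y ω)) (1, 1))) * htot + hdet
  have := mi_eq_zero_of_indep p hp X Y hindep
  rw [this] at hI
  exact lt_irrefl 0 hI
end
end

section
/- If U₁ → X → Y (i.e., I(U₁ ∧ Y | X) = 0), g₂ is a function of Y with X → g₂(Y) → Y, then X → (g₂(Y), U₁) → Y, i.e., I(X ∧ Y | g₂(Y), U₁) = 0. -/
open scoped Classical
open Finset Real

noncomputable section

variable {Ω : Type*} [Fintype Ω]

/- ### Auxiliary lemmas -/

lemma stmt17_point (a A B C : ℝ) (ha : 0 ≤ a) (haA : a ≤ A) (haB : a ≤ B) (hAC : A ≤ C) :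
    (a - A * B / C) / Real.log 2
      ≤ a * (Real.logb 2 a + Real.logb 2 C - Real.logb 2 A - Real.logb 2 B) := by
  have hl2 : 0 < Real.log 2 := Real.log_pos one_lt_two
  rcases eq_or_lt_of_le ha with h | hpos
  · rw [← h, zero_mul, zero_sub]
    have hA : 0 ≤ A := h ▸ haA
    have hB : 0 ≤ B := h ▸ haB
    have : 0 ≤ A * B / C := div_nonneg (mul_nonneg hA hB) (le_trans hA hAC)
    exact div_nonpos_of_nonpos_of_nonneg (by linarith) hl2.le
  · have hA : 0 < A := lt_of_lt_of_le hpos haA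
    have hB : 0 < B := lt_of_lt_of_le hpos haB
    have hC : 0 < C := lt_of_lt_of_le hA hAC
    have hlog : Real.log (A * B / C / a) ≤ A * B / C / a - 1 :=
      Real.log_le_sub_one_of_pos (by positivity)
    rw [Real.log_div (by positivity) (ne_of_gt hpos),
        Real.log_div (by positivity) (ne_of_gt hC),
        Real.log_mul (ne_of_gt hA) (ne_of_gt hB)] at hlog
    have he : a * (A * B / C / a - 1) = A * B / C - a := by field_simp
    have h2 : a - A * B / C ≤ a * (Real.log a + Real.log C - Real.log A - Real.log B) := by
      nlinarith [mul_le_mul_of_nonneg_left hlog hpos.le]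
    have h3 : a * (Real.logb 2 a + Real.logb 2 C - Real.logb 2 A - Real.logb 2 B)
        = (a * (Real.log a + Real.log C - Real.log A - Real.log B)) / Real.log 2 := by
      simp only [Real.logb]; ring
    rw [h3]
    gcongr

lemma stmt17_key {𝒳 𝒴 γ : Type*} [Fintype 𝒳] [Fintype 𝒴] [Fintype γ]
    (q : 𝒳 → 𝒴 → γ → ℝ) (h0 : ∀ x y z, 0 ≤ q x y z)
    (h1 : ∑ x, ∑ y, ∑ z, q x y z = 1) :
    0 ≤ (-∑ x, ∑ z, (∑ y, q x y z) * Real.logb 2 (∑ y, q x y z))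
      + (-∑ y, ∑ z, (∑ x, q x y z) * Real.logb 2 (∑ x, q x y z))
      - (-∑ x, ∑ y, ∑ z, q x y z * Real.logb 2 (q x y z))
      - (-∑ z, (∑ x, ∑ y, q x y z) * Real.logb 2 (∑ x, ∑ y, q x y z)) := by
  have hl2 : 0 < Real.log 2 := Real.log_pos one_lt_two
  have eH1 : (∑ x, ∑ z, (∑ y, q x y z) * Real.logb 2 (∑ y, q x y z))
      = ∑ x, ∑ y, ∑ z, q x y z * Real.logb 2 (∑ y', q x y' z) := by
    refine Finset.sum_congr rfl fun x _ => ?_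
    conv_rhs => rw [Finset.sum_comm]
    exact Finset.sum_congr rfl fun z _ => Finset.sum_mul _ _ _
  have eH2 : (∑ y, ∑ z, (∑ x, q x y z) * Real.logb 2 (∑ x, q x y z))
      = ∑ x, ∑ y, ∑ z, q x y z * Real.logb 2 (∑ x', q x' y z) := by
    calc (∑ y, ∑ z, (∑ x, q x y z) * Real.logb 2 (∑ x, q x y z))
        = ∑ y, ∑ z, ∑ x, q x y z * Real.logb 2 (∑ x', q x' y z) :=
          Finset.sum_congr rfl fun y _ => Finset.sum_congr rfl fun z _ => Finset.sum_mul _ _ _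
      _ = ∑ y, ∑ x, ∑ z, q x y z * Real.logb 2 (∑ x', q x' y z) :=
          Finset.sum_congr rfl fun y _ => Finset.sum_comm
      _ = ∑ x, ∑ y, ∑ z, q x y z * Real.logb 2 (∑ x', q x' y z) := Finset.sum_comm
  have eH4 : (∑ z, (∑ x, ∑ y, q x y z) * Real.logb 2 (∑ x, ∑ y, q x y z))
      = ∑ x, ∑ y, ∑ z, q x y z * Real.logb 2 (∑ x', ∑ y', q x' y' z) := by
    calc (∑ z, (∑ x, ∑ y, q x y z) * Real.logb 2 (∑ x, ∑ y, q x y z))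
        = ∑ z, ∑ x, ∑ y, q x y z * Real.logb 2 (∑ x', ∑ y', q x' y' z) := by
          refine Finset.sum_congr rfl fun z _ => ?_
          rw [Finset.sum_mul]
          exact Finset.sum_congr rfl fun x _ => Finset.sum_mul _ _ _
      _ = ∑ x, ∑ z, ∑ y, q x y z * Real.logb 2 (∑ x', ∑ y', q x' y' z) := Finset.sum_comm
      _ = ∑ x, ∑ y, ∑ z, q x y z * Real.logb 2 (∑ x', ∑ y', q x' y' z) :=
          Finset.sum_congr rfl fun x _ => Finset.sum_comm
  rw [eH1, eH2, eH4]
  suffices h : 0 ≤ (∑ x, ∑ y, ∑ z, q x y z * Real.logb 2 (q x y z))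
      + (∑ x, ∑ y, ∑ z, q x y z * Real.logb 2 (∑ x', ∑ y', q x' y' z))
      - (∑ x, ∑ y, ∑ z, q x y z * Real.logb 2 (∑ y', q x y' z))
      - (∑ x, ∑ y, ∑ z, q x y z * Real.logb 2 (∑ x', q x' y z)) by linarith
  have hmerge : (∑ x, ∑ y, ∑ z, q x y z * Real.logb 2 (q x y z))
      + (∑ x, ∑ y, ∑ z, q x y z * Real.logb 2 (∑ x', ∑ y', q x' y' z))
      - (∑ x, ∑ y, ∑ z, q x y z * Real.logb 2 (∑ y', q x y' z))
      - (∑ x, ∑ y, ∑ z, q x y z * Real.logb 2 (∑ x', q x' y z))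
      = ∑ x, ∑ y, ∑ z, (q x y z * Real.logb 2 (q x y z)
          + q x y z * Real.logb 2 (∑ x', ∑ y', q x' y' z)
          - q x y z * Real.logb 2 (∑ y', q x y' z)
          - q x y z * Real.logb 2 (∑ x', q x' y z)) := by
    simp only [← Finset.sum_add_distrib, ← Finset.sum_sub_distrib]
  rw [hmerge]
  have hlb : ∀ x y z, (q x y z - (∑ y', q x y' z) * (∑ x', q x' y z) / (∑ x', ∑ y', q x' y' z))
      / Real.log 2
      ≤ q x y z * Real.logb 2 (q x y z)
          + q x y z * Real.logb 2 (∑ x', ∑ y', q x' y' z)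
          - q x y z * Real.logb 2 (∑ y', q x y' z)
          - q x y z * Real.logb 2 (∑ x', q x' y z) := by
    intro x y z
    refine le_of_le_of_eq (stmt17_point (q x y z) (∑ y', q x y' z) (∑ x', q x' y z)
      (∑ x', ∑ y', q x' y' z) (h0 x y z) ?_ ?_ ?_) (by ring)
    · exact Finset.single_le_sum (fun y' _ => h0 x y' z) (Finset.mem_univ y)
    · exact Finset.single_le_sum (fun x' _ => h0 x' y z) (Finset.mem_univ x)
    · exact Finset.single_le_sum (f := fun x' => ∑ y', q x' y' z)
        (fun x' _ => Finset.sum_nonneg fun y' _ => h0 x' y' z) (Finset.mem_univ x)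
  have hRle : (∑ x, ∑ y, ∑ z, (∑ y', q x y' z) * (∑ x', q x' y z)
      / (∑ x', ∑ y', q x' y' z)) ≤ 1 := by
    calc (∑ x, ∑ y, ∑ z, (∑ y', q x y' z) * (∑ x', q x' y z) / (∑ x', ∑ y', q x' y' z))
        = ∑ x, ∑ z, ∑ y, (∑ y', q x y' z) * (∑ x', q x' y z) / (∑ x', ∑ y', q x' y' z) :=
          Finset.sum_congr rfl fun x _ => Finset.sum_comm
      _ = ∑ z, ∑ x, ∑ y, (∑ y', q x y' z) * (∑ x', q x' y z) / (∑ x', ∑ y', q x' y' z) :=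
          Finset.sum_comm
      _ ≤ ∑ z, ∑ x, ∑ y, q x y z := by
          refine Finset.sum_le_sum fun z _ => ?_
          by_cases hC : (∑ x', ∑ y', q x' y' z) = 0
          · refine le_trans (le_of_eq ?_) (Finset.sum_nonneg fun x _ =>
              Finset.sum_nonneg fun y _ => h0 x y z)
            simp [hC]
          · refine le_of_eq (Finset.sum_congr rfl fun x _ => ?_)
            have hBC : (∑ y, ∑ x', q x' y z) = ∑ x', ∑ y', q x' y' z := Finset.sum_comm
            calc ∑ y, (∑ y', q x y' z) * (∑ x', q x' y z) / (∑ x', ∑ y', q x' y' z)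
                = ∑ y, (∑ y', q x y' z) / (∑ x', ∑ y', q x' y' z) * (∑ x', q x' y z) :=
                  Finset.sum_congr rfl fun y _ => by ring
              _ = (∑ y', q x y' z) / (∑ x', ∑ y', q x' y' z) * ∑ y, (∑ x', q x' y z) :=
                  (Finset.mul_sum _ _ _).symm
              _ = (∑ y', q x y' z) / (∑ x', ∑ y', q x' y' z) * (∑ x', ∑ y', q x' y' z) := by
                  rw [hBC]
              _ = ∑ y, q x y z := div_mul_cancel₀ _ hC
      _ = ∑ x, ∑ z, ∑ y, q x y z := Finset.sum_comm
      _ = ∑ x, ∑ y, ∑ z, q x y z := Finset.sum_congr rfl fun x _ => Finset.sum_comm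
      _ = 1 := h1
  calc (0:ℝ)
      ≤ (1 - ∑ x, ∑ y, ∑ z, (∑ y', q x y' z) * (∑ x', q x' y z) / (∑ x', ∑ y', q x' y' z))
          / Real.log 2 := div_nonneg (by linarith) hl2.le
    _ = ∑ x, ∑ y, ∑ z, (q x y z - (∑ y', q x y' z) * (∑ x', q x' y z)
          / (∑ x', ∑ y', q x' y' z)) / Real.log 2 := by
        simp only [div_eq_mul_inv, Finset.sum_sub_distrib, ← Finset.sum_mul]
        rw [h1]
    _ ≤ _ := Finset.sum_le_sum fun x _ => Finset.sum_le_sum fun y _ =>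
        Finset.sum_le_sum fun z _ => hlb x y z

lemma ent_comp {α β : Type*} [Fintype α] [Fintype β] (p : Ω → ℝ) (X : Ω → α)
    (f : α → β) (hf : Function.Injective f) :
    ent p (fun ω => f (X ω)) = ent p X := by
  unfold ent
  congr 1
  have h0 : ∀ b ∈ (univ : Finset β), b ∉ (univ : Finset α).image f →
      dist' p (fun ω => f (X ω)) b * Real.logb 2 (dist' p (fun ω => f (X ω)) b) = 0 := by
    intro b _ hb
    have : dist' p (fun ω => f (X ω)) b = 0 := by
      refine Finset.sum_eq_zero fun ω _ => ?_
      have : f (X ω) ≠ b := fun h => hb (Finset.mem_image.mpr ⟨X ω, Finset.mem_univ _, h⟩)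
      simp [this]
    simp [this]
  rw [← Finset.sum_subset (Finset.subset_univ ((univ : Finset α).image f)) h0,
    Finset.sum_image (fun a _ b _ h => hf h)]
  refine Finset.sum_congr rfl fun a _ => ?_
  have : dist' p (fun ω => f (X ω)) (f a) = dist' p X a :=
    Finset.sum_congr rfl fun ω _ => by simp [hf.eq_iff]
  rw [this]

lemma cmi_nonneg {𝒳 𝒴 γ : Type*} [Fintype 𝒳] [Fintype 𝒴] [Fintype γ]
    (p : Ω → ℝ) (hp : IsPMF p) (X : Ω → 𝒳) (Y : Ω → 𝒴) (Z : Ω → γ) :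
    0 ≤ cmi p X Y Z := by
  set q : 𝒳 → 𝒴 → γ → ℝ := fun x y z => ∑ ω, if X ω = x ∧ Y ω = y ∧ Z ω = z then p ω else 0
    with hq_def
  have hq0 : ∀ x y z, 0 ≤ q x y z := fun x y z =>
    Finset.sum_nonneg fun ω _ => by by_cases h : X ω = x ∧ Y ω = y ∧ Z ω = z <;> simp [h, hp.1 ω]
  have hdXZ : ∀ x z, dist' p (fun ω => (X ω, Z ω)) (x, z) = ∑ y, q x y z := by
    intro x z
    simp only [hq_def]
    rw [Finset.sum_comm]
    refine Finset.sum_congr rfl fun ω _ => ?_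
    by_cases h1 : X ω = x <;> by_cases h2 : Z ω = z <;>
      simp [Prod.ext_iff, h1, h2, Finset.sum_ite_eq]
  have hdYZ : ∀ y z, dist' p (fun ω => (Y ω, Z ω)) (y, z) = ∑ x, q x y z := by
    intro y z
    simp only [hq_def]
    rw [Finset.sum_comm]
    refine Finset.sum_congr rfl fun ω _ => ?_
    by_cases h1 : Y ω = y <;> by_cases h2 : Z ω = z <;>
      simp [Prod.ext_iff, h1, h2, Finset.sum_ite_eq]
  have hdZ : ∀ z, dist' p Z z = ∑ x, ∑ y, q x y z := by
    intro z
    simp only [hq_def]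
    have e1 : ∀ x, (∑ y, ∑ ω, if X ω = x ∧ Y ω = y ∧ Z ω = z then p ω else 0)
        = ∑ ω, ∑ y, if X ω = x ∧ Y ω = y ∧ Z ω = z then p ω else 0 := fun x => Finset.sum_comm
    rw [Finset.sum_congr rfl fun x _ => e1 x, Finset.sum_comm]
    refine Finset.sum_congr rfl fun ω _ => ?_
    by_cases h2 : Z ω = z
    · simp [h2, ite_and, Finset.sum_ite_eq]
    · simp [h2]
  have hdXYZ : ∀ x y z, dist' p (fun ω => ((X ω, Y ω), Z ω)) ((x, y), z) = q x y z := by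
    intro x y z
    simp only [hq_def, dist']
    exact Finset.sum_congr rfl fun ω _ => by simp [Prod.ext_iff, and_assoc]
  have htot : ∑ x, ∑ y, ∑ z, q x y z = 1 := by
    simp only [hq_def]
    rw [Finset.sum_congr rfl (fun x (_ : x ∈ univ) =>
          Finset.sum_congr rfl (fun y (_ : y ∈ univ) => Finset.sum_comm)),
        Finset.sum_congr rfl (fun x (_ : x ∈ univ) => Finset.sum_comm), Finset.sum_comm, ← hp.2]
    refine Finset.sum_congr rfl fun ω _ => ?_
    simp [ite_and, Finset.sum_ite_eq]
  have eXZ : ent p (fun ω => (X ω, Z ω))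
      = -∑ x, ∑ z, (∑ y, q x y z) * Real.logb 2 (∑ y, q x y z) := by
    simp only [ent, Fintype.sum_prod_type, hdXZ]
  have eYZ : ent p (fun ω => (Y ω, Z ω))
      = -∑ y, ∑ z, (∑ x, q x y z) * Real.logb 2 (∑ x, q x y z) := by
    simp only [ent, Fintype.sum_prod_type, hdYZ]
  have eXYZ : ent p (fun ω => ((X ω, Y ω), Z ω))
      = -∑ x, ∑ y, ∑ z, q x y z * Real.logb 2 (q x y z) := by
    simp only [ent, Fintype.sum_prod_type, hdXYZ]
  have eZ : ent p Z = -∑ z, (∑ x, ∑ y, q x y z) * Real.logb 2 (∑ x, ∑ y, q x y z) := by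
    simp only [ent, hdZ]
  rw [cmi, eXZ, eYZ, eXYZ, eZ]
  exact stmt17_key q hq0 htot

lemma cmi_comm {α β γ : Type*} [Fintype α] [Fintype β] [Fintype γ]
    (p : Ω → ℝ) (X : Ω → α) (Y : Ω → β) (Z : Ω → γ) :
    cmi p X Y Z = cmi p Y X Z := by
  have e1 : ent p (fun ω => ((X ω, Y ω), Z ω)) = ent p (fun ω => ((Y ω, X ω), Z ω)) :=
    ent_comp p (fun ω => ((Y ω, X ω), Z ω)) (fun t => ((t.1.2, t.1.1), t.2))
      (fun a b h => by simp only [Prod.ext_iff] at h ⊢; tauto)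
  simp only [cmi]; rw [e1]; ring

lemma cmi_swap_fst {α α' β γ : Type*} [Fintype α] [Fintype α'] [Fintype β] [Fintype γ]
    (p : Ω → ℝ) (A : Ω → α) (B : Ω → α') (Y : Ω → β) (Z : Ω → γ) :
    cmi p (fun ω => (B ω, A ω)) Y Z = cmi p (fun ω => (A ω, B ω)) Y Z := by
  have e1 : ent p (fun ω => ((B ω, A ω), Z ω)) = ent p (fun ω => ((A ω, B ω), Z ω)) :=
    ent_comp p (fun ω => ((A ω, B ω), Z ω)) (fun t => ((t.1.2, t.1.1), t.2))
      (fun a b h => by simp only [Prod.ext_iff] at h ⊢; tauto)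
  have e2 : ent p (fun ω => (((B ω, A ω), Y ω), Z ω))
      = ent p (fun ω => (((A ω, B ω), Y ω), Z ω)) :=
    ent_comp p (fun ω => (((A ω, B ω), Y ω), Z ω)) (fun t => (((t.1.1.2, t.1.1.1), t.1.2), t.2))
      (fun a b h => by simp only [Prod.ext_iff] at h ⊢; tauto)
  simp only [cmi]; rw [e1, e2]

lemma cmi_swap_trd {α β γ γ' : Type*} [Fintype α] [Fintype β] [Fintype γ] [Fintype γ']
    (p : Ω → ℝ) (X : Ω → α) (Y : Ω → β) (A : Ω → γ) (B : Ω → γ') :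
    cmi p X Y (fun ω => (B ω, A ω)) = cmi p X Y (fun ω => (A ω, B ω)) := by
  have e1 : ent p (fun ω => (X ω, (B ω, A ω))) = ent p (fun ω => (X ω, (A ω, B ω))) :=
    ent_comp p (fun ω => (X ω, (A ω, B ω))) (fun t => (t.1, (t.2.2, t.2.1)))
      (fun a b h => by simp only [Prod.ext_iff] at h ⊢; tauto)
  have e2 : ent p (fun ω => (Y ω, (B ω, A ω))) = ent p (fun ω => (Y ω, (A ω, B ω))) :=
    ent_comp p (fun ω => (Y ω, (A ω, B ω))) (fun t => (t.1, (t.2.2, t.2.1)))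
      (fun a b h => by simp only [Prod.ext_iff] at h ⊢; tauto)
  have e3 : ent p (fun ω => ((X ω, Y ω), (B ω, A ω)))
      = ent p (fun ω => ((X ω, Y ω), (A ω, B ω))) :=
    ent_comp p (fun ω => ((X ω, Y ω), (A ω, B ω))) (fun t => (t.1, (t.2.2, t.2.1)))
      (fun a b h => by simp only [Prod.ext_iff] at h ⊢; tauto)
  have e4 : ent p (fun ω => (B ω, A ω)) = ent p (fun ω => (A ω, B ω)) :=
    ent_comp p (fun ω => (A ω, B ω)) (fun t => (t.2, t.1))
      (fun a b h => by simp only [Prod.ext_iff] at h ⊢; tauto)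
  simp only [cmi]; rw [e1, e2, e3, e4]

/-- Chain rule: `I(A,B ∧ Y | Z) = I(B ∧ Y | Z) + I(A ∧ Y | Z,B)`. -/
lemma cmi_chain {α α' β γ : Type*} [Fintype α] [Fintype α'] [Fintype β] [Fintype γ]
    (p : Ω → ℝ) (A : Ω → α) (B : Ω → α') (Y : Ω → β) (Z : Ω → γ) :
    cmi p (fun ω => (A ω, B ω)) Y Z
      = cmi p B Y Z + cmi p A Y (fun ω => (Z ω, B ω)) := by
  have ra : ent p (fun ω => (A ω, (Z ω, B ω))) = ent p (fun ω => ((A ω, B ω), Z ω)) :=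
    (ent_comp p (fun ω => (A ω, (Z ω, B ω))) (fun t => ((t.1, t.2.2), t.2.1))
      (fun a b h => by simp only [Prod.ext_iff] at h ⊢; tauto)).symm
  have rb : ent p (fun ω => (Y ω, (Z ω, B ω))) = ent p (fun ω => ((B ω, Y ω), Z ω)) :=
    (ent_comp p (fun ω => (Y ω, (Z ω, B ω))) (fun t => ((t.2.2, t.1), t.2.1))
      (fun a b h => by simp only [Prod.ext_iff] at h ⊢; tauto)).symm
  have rc : ent p (fun ω => ((A ω, Y ω), (Z ω, B ω)))
      = ent p (fun ω => (((A ω, B ω), Y ω), Z ω)) :=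
    (ent_comp p (fun ω => ((A ω, Y ω), (Z ω, B ω))) (fun t => (((t.1.1, t.2.2), t.1.2), t.2.1))
      (fun a b h => by simp only [Prod.ext_iff] at h ⊢; tauto)).symm
  have rd : ent p (fun ω => (Z ω, B ω)) = ent p (fun ω => (B ω, Z ω)) :=
    ent_comp p (fun ω => (B ω, Z ω)) (fun t => (t.2, t.1))
      (fun a b h => by simp only [Prod.ext_iff] at h ⊢; tauto)
  simp only [cmi]; rw [ra, rb, rc, rd]; ring

/-- Adjoining a function of `Y` to `Y` does not change conditional mutual information. -/
lemma cmi_glue {α β γ δ : Type*} [Fintype α] [Fintype β] [Fintype γ] [Fintype δ]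
    (p : Ω → ℝ) (U : Ω → α) (Y : Ω → β) (X : Ω → γ) (g : β → δ) :
    cmi p U (fun ω => (g (Y ω), Y ω)) X = cmi p U Y X := by
  have e1 : ent p (fun ω => ((g (Y ω), Y ω), X ω)) = ent p (fun ω => (Y ω, X ω)) :=
    ent_comp p (fun ω => (Y ω, X ω)) (fun t => ((g t.1, t.1), t.2))
      (fun a b h => by simp only [Prod.ext_iff] at h ⊢; tauto)
  have e2 : ent p (fun ω => ((U ω, (g (Y ω), Y ω)), X ω))
      = ent p (fun ω => ((U ω, Y ω), X ω)) :=
    ent_comp p (fun ω => ((U ω, Y ω), X ω)) (fun t => ((t.1.1, (g t.1.2, t.1.2)), t.2))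
      (fun a b h => by simp only [Prod.ext_iff] at h ⊢; tauto)
  simp only [cmi]; rw [e1, e2]

/-- If `U₁ -∘- X -∘- Y` and `X -∘- g₂(Y) -∘- Y`, then `X -∘- (g₂(Y), U₁) -∘- Y`. -/
theorem stmt17 {Ω 𝒳 𝒴 𝒰 γ : Type*} [Fintype Ω] [Fintype 𝒳] [Fintype 𝒴] [Fintype 𝒰] [Fintype γ]
    (p : Ω → ℝ) (hp : IsPMF p) (X : Ω → 𝒳) (Y : Ω → 𝒴) (U₁ : Ω → 𝒰) (g₂ : 𝒴 → γ)
    (hU : cmi p U₁ Y X = 0)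
    (hg : cmi p X Y (fun ω => g₂ (Y ω)) = 0) :
    cmi p X Y (fun ω => (g₂ (Y ω), U₁ ω)) = 0 := by
  -- Step 1: I(U₁ ∧ Y | X, g₂(Y)) = 0
  have s1 : cmi p (fun ω => (Y ω, g₂ (Y ω))) U₁ X
      = cmi p (fun ω => g₂ (Y ω)) U₁ X + cmi p Y U₁ (fun ω => (X ω, g₂ (Y ω))) :=
    cmi_chain p Y (fun ω => g₂ (Y ω)) U₁ X
  have s2 : cmi p (fun ω => (Y ω, g₂ (Y ω))) U₁ X = 0 := by
    rw [cmi_swap_fst p (fun ω => g₂ (Y ω)) Y U₁ X,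
      cmi_comm p (fun ω => (g₂ (Y ω), Y ω)) U₁ X, cmi_glue p U₁ Y X g₂,
      cmi_comm p U₁ Y X] at *
    · exact hU
  have n1 : 0 ≤ cmi p (fun ω => g₂ (Y ω)) U₁ X := cmi_nonneg p hp _ _ _
  have n2 : 0 ≤ cmi p Y U₁ (fun ω => (X ω, g₂ (Y ω))) := cmi_nonneg p hp _ _ _
  have z2 : cmi p Y U₁ (fun ω => (X ω, g₂ (Y ω))) = 0 := by linarith
  -- Step 2: chain the other way
  have t1 : cmi p (fun ω => (U₁ ω, X ω)) Y (fun ω => g₂ (Y ω))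
      = cmi p X Y (fun ω => g₂ (Y ω)) + cmi p U₁ Y (fun ω => (g₂ (Y ω), X ω)) :=
    cmi_chain p U₁ X Y (fun ω => g₂ (Y ω))
  have t2 : cmi p U₁ Y (fun ω => (g₂ (Y ω), X ω)) = cmi p U₁ Y (fun ω => (X ω, g₂ (Y ω))) :=
    cmi_swap_trd p U₁ Y X (fun ω => g₂ (Y ω))
  have t2' : cmi p U₁ Y (fun ω => (X ω, g₂ (Y ω))) = 0 :=
    (cmi_comm p U₁ Y (fun ω => (X ω, g₂ (Y ω)))).trans z2
  have t3 : cmi p (fun ω => (U₁ ω, X ω)) Y (fun ω => g₂ (Y ω))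
      = cmi p (fun ω => (X ω, U₁ ω)) Y (fun ω => g₂ (Y ω)) :=
    cmi_swap_fst p X U₁ Y (fun ω => g₂ (Y ω))
  have t4 : cmi p (fun ω => (X ω, U₁ ω)) Y (fun ω => g₂ (Y ω))
      = cmi p U₁ Y (fun ω => g₂ (Y ω)) + cmi p X Y (fun ω => (g₂ (Y ω), U₁ ω)) :=
    cmi_chain p X U₁ Y (fun ω => g₂ (Y ω))
  have n3 : 0 ≤ cmi p U₁ Y (fun ω => g₂ (Y ω)) := cmi_nonneg p hp _ _ _
  have n4 : 0 ≤ cmi p X Y (fun ω => (g₂ (Y ω), U₁ ω)) := cmi_nonneg p hp _ _ _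
  linarith
end
end

section
/- Consider the 3×3 joint pmf on {0,1,2}² given (rows indexed by X, columns by Y) by [[a,a,a],[b,a,a],[a,c,a]] with a,b,c ≥ 0, 7a+b+c = 1, 2a > b > a, and c ≠ a. Then with U₁ = f₁(X) where f₁(2)=1, f₁(0)=f₁(1)=2, and U₂ = f₂(Y,U₁) where f₂(·,1)=0, f₂(0,2)=1, f₂(1,2)=f₂(2,2)=2, the chain X → (U₁,U₂) → Y holds and I(X,Y ∧ U₁,U₂) = H(U₁,U₂) < min{H(X), H(Y)}. -/
open scoped Classical
open Finset Real

noncomputable section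

variable {Ω : Type*} [Fintype Ω]

/-- First message map. -/
def f₁ : Fin 3 → Fin 3 := ![2, 2, 1]

/-- Second message map: `f₂(y, 1) = 0`, `f₂(0, 2) = 1`, `f₂(1, 2) = f₂(2, 2) = 2`. -/
def f₂ : Fin 3 → Fin 3 → Fin 3 := fun y u => if u = 1 then 0 else if y = 0 then 1 else 2

lemma dist_comp {α : Type*} (p : Ω → ℝ) (X Y : Ω → Fin 3)
    (g : Fin 3 × Fin 3 → α) (z : α) :
    dist' p (fun ω => g (X ω, Y ω)) z
      = ∑ xy : Fin 3 × Fin 3, if g xy = z then dist' p (fun ω => (X ω, Y ω)) xy else 0 := by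
  calc dist' p (fun ω => g (X ω, Y ω)) z
      = ∑ ω, if g (X ω, Y ω) = z then p ω else 0 := rfl
    _ = ∑ ω, ∑ xy : Fin 3 × Fin 3,
          if (X ω, Y ω) = xy then (if g xy = z then p ω else 0) else 0 := by
        refine Finset.sum_congr rfl fun ω _ => ?_
        rw [Finset.sum_ite_eq]
        simp
    _ = ∑ xy : Fin 3 × Fin 3, ∑ ω,
          if (X ω, Y ω) = xy then (if g xy = z then p ω else 0) else 0 := Finset.sum_comm
    _ = ∑ xy : Fin 3 × Fin 3,
          if g xy = z then dist' p (fun ω => (X ω, Y ω)) xy else 0 := by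
        refine Finset.sum_congr rfl fun xy _ => ?_
        by_cases hgz : g xy = z
        · simp only [hgz, if_pos]
          refine Finset.sum_congr rfl fun ω _ => ?_
          by_cases h : (X ω, Y ω) = xy <;> simp [h]
        · simp [hgz]

/-- The example where interaction helps: for the given 3×3 pmf, the two-message interactive
scheme `U₁ = f₁(X)`, `U₂ = f₂(Y, U₁)` satisfies `X -∘- (U₁,U₂) -∘- Y`,
`I(X,Y ∧ U₁,U₂) = H(U₁,U₂)`, and `H(U₁,U₂) < min{H(X), H(Y)}`. -/
theorem stmt18 {Ω : Type*} [Fintype Ω]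
    (p : Ω → ℝ) (hp : IsPMF p) (X : Ω → Fin 3) (Y : Ω → Fin 3) (a b c : ℝ)
    (ha : 0 ≤ a) (hb : 0 ≤ b) (hc : 0 ≤ c)
    (hsum : 7 * a + b + c = 1) (hab : a < b) (hba : b < 2 * a) (hca : c ≠ a)
    (hpmf : ∀ x y, dist' p (fun ω => (X ω, Y ω)) (x, y)
              = !![a, a, a; b, a, a; a, c, a] x y)
    (U₁ : Ω → Fin 3) (U₂ : Ω → Fin 3)
    (hU₁ : ∀ ω, U₁ ω = f₁ (X ω)) (hU₂ : ∀ ω, U₂ ω = f₂ (Y ω) (U₁ ω)) :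
    cmi p X Y (fun ω => (U₁ ω, U₂ ω)) = 0 ∧
    mi p (fun ω => (X ω, Y ω)) (fun ω => (U₁ ω, U₂ ω))
      = ent p (fun ω => (U₁ ω, U₂ ω)) ∧
    ent p (fun ω => (U₁ ω, U₂ ω)) < min (ent p X) (ent p Y) := by
  have ha' : 0 < a := by linarith
  have hb' : 0 < b := lt_trans ha' hab
  -- generic distribution computation
  have hd : ∀ {α : Type} (g : Fin 3 × Fin 3 → α) (z : α),
      dist' p (fun ω => g (X ω, Y ω)) z
        = ∑ xy : Fin 3 × Fin 3, if g xy = z then !![a,a,a;b,a,a;a,c,a] xy.1 xy.2 else 0 := by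
    intro α g z
    rw [dist_comp]
    refine Finset.sum_congr rfl fun xy _ => ?_
    obtain ⟨x, y⟩ := xy
    rw [hpmf]
  -- generic entropy computation
  have hent : ∀ {α : Type} [Fintype α] (g : Fin 3 × Fin 3 → α) (V : Ω → α),
      (∀ ω, V ω = g (X ω, Y ω)) →
      ent p V = -∑ z,
        (∑ xy : Fin 3 × Fin 3, if g xy = z then !![a,a,a;b,a,a;a,c,a] xy.1 xy.2 else 0)
          * Real.logb 2
        (∑ xy : Fin 3 × Fin 3, if g xy = z then !![a,a,a;b,a,a;a,c,a] xy.1 xy.2 else 0) := by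
    intro α _ g V hV
    have hdV : ∀ z, dist' p V z
        = ∑ xy : Fin 3 × Fin 3, if g xy = z then !![a,a,a;b,a,a;a,c,a] xy.1 xy.2 else 0 := by
      intro z
      rw [show V = (fun ω => g (X ω, Y ω)) from funext hV]
      exact hd g z
    rw [ent]
    simp only [hdV]
  have hX : ent p X
      = -((3*a) * Real.logb 2 (3*a) + (2*a+b) * Real.logb 2 (2*a+b)
          + (2*a+c) * Real.logb 2 (2*a+c)) := by
    rw [hent (fun q => q.1) X (fun ω => rfl)]
    simp [Fintype.sum_prod_type, Fin.sum_univ_three, f₁, f₂, -Prod.mk_one_one, -Prod.mk_zero_zero]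
    ring_nf
  have hY : ent p Y
      = -((3*a) * Real.logb 2 (3*a) + (2*a+b) * Real.logb 2 (2*a+b)
          + (2*a+c) * Real.logb 2 (2*a+c)) := by
    rw [hent (fun q => q.2) Y (fun ω => rfl)]
    simp [Fintype.sum_prod_type, Fin.sum_univ_three, f₁, f₂, -Prod.mk_one_one, -Prod.mk_zero_zero]
    ring_nf
  have hU : ent p (fun ω => (f₁ (X ω), f₂ (Y ω) (f₁ (X ω))))
      = -((2*a+c) * Real.logb 2 (2*a+c) + (a+b) * Real.logb 2 (a+b)
          + (4*a) * Real.logb 2 (4*a)) := by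
    rw [hent (fun q => (f₁ q.1, f₂ q.2 (f₁ q.1))) _ (fun ω => rfl)]
    simp [Fintype.sum_prod_type, Fin.sum_univ_three, f₁, f₂, -Prod.mk_one_one, -Prod.mk_zero_zero]
    ring_nf
  have hXY : ent p (fun ω => (X ω, Y ω))
      = -(7*(a * Real.logb 2 a) + b * Real.logb 2 b + c * Real.logb 2 c) := by
    rw [hent (fun q => q) _ (fun ω => rfl)]
    simp [Fintype.sum_prod_type, Fin.sum_univ_three, f₁, f₂, -Prod.mk_one_one, -Prod.mk_zero_zero]
    ring_nf
  have hXU : ent p (fun ω => (X ω, (f₁ (X ω), f₂ (Y ω) (f₁ (X ω)))))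
      = -((2*a+c) * Real.logb 2 (2*a+c) + a * Real.logb 2 a + b * Real.logb 2 b
          + 2*((2*a) * Real.logb 2 (2*a))) := by
    rw [hent (fun q => (q.1, (f₁ q.1, f₂ q.2 (f₁ q.1)))) _ (fun ω => rfl)]
    simp [Fintype.sum_prod_type, Fin.sum_univ_three, f₁, f₂, -Prod.mk_one_one, -Prod.mk_zero_zero]
    ring_nf
  have hYU : ent p (fun ω => (Y ω, (f₁ (X ω), f₂ (Y ω) (f₁ (X ω)))))
      = -(2*(a * Real.logb 2 a) + c * Real.logb 2 c + (a+b) * Real.logb 2 (a+b)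
          + 2*((2*a) * Real.logb 2 (2*a))) := by
    rw [hent (fun q => (q.2, (f₁ q.1, f₂ q.2 (f₁ q.1)))) _ (fun ω => rfl)]
    simp [Fintype.sum_prod_type, Fin.sum_univ_three, f₁, f₂, -Prod.mk_one_one, -Prod.mk_zero_zero]
    ring_nf
  have hXYU : ent p (fun ω => ((X ω, Y ω), (f₁ (X ω), f₂ (Y ω) (f₁ (X ω)))))
      = -(7*(a * Real.logb 2 a) + b * Real.logb 2 b + c * Real.logb 2 c) := by
    rw [hent (fun q => (q, (f₁ q.1, f₂ q.2 (f₁ q.1)))) _ (fun ω => rfl)]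
    simp [Fintype.sum_prod_type, Fin.sum_univ_three, f₁, f₂, -Prod.mk_one_one, -Prod.mk_zero_zero]
    ring_nf
  -- logarithm identities
  have hlg2 : Real.logb 2 (2*a) = 1 + Real.logb 2 a := by
    rw [Real.logb_mul two_ne_zero (ne_of_gt ha'), Real.logb_self_eq_one] <;> norm_num
  have hlg4 : Real.logb 2 (4*a) = 2 + Real.logb 2 a := by
    have h2a : Real.logb 2 (2*(2*a)) = 1 + Real.logb 2 (2*a) := by
      rw [Real.logb_mul two_ne_zero (by positivity), Real.logb_self_eq_one] <;> norm_num
    rw [show (4:ℝ)*a = 2*(2*a) by ring, h2a, hlg2]; ring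
  -- strict convexity inequality
  have h3ab : 0 < 3*a - b := by linarith
  have ht1 : 0 < (2*a-b)/(3*a-b) := div_pos (by linarith) h3ab
  have ht2 : 0 < a/(3*a-b) := div_pos ha' h3ab
  have htsum : (2*a-b)/(3*a-b) + a/(3*a-b) = 1 := by
    rw [← add_div, show 2*a-b+a = 3*a-b by ring, div_self (ne_of_gt h3ab)]
  have hmem1 : (a+b) ∈ Set.Ici (0:ℝ) := Set.mem_Ici.mpr (by linarith)
  have hmem2 : (4*a) ∈ Set.Ici (0:ℝ) := Set.mem_Ici.mpr (by linarith)
  have hne : a + b ≠ 4*a := by intro h; linarith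
  have hc1 := Real.strictConvexOn_mul_log.2 hmem1 hmem2 hne ht1 ht2 htsum
  have hc2 := Real.strictConvexOn_mul_log.2 hmem1 hmem2 hne ht2 ht1 (by linarith [htsum])
  simp only [smul_eq_mul] at hc1 hc2
  rw [show (2*a-b)/(3*a-b)*(a+b) + a/(3*a-b)*(4*a) = 2*a+b by rw [div_mul_eq_mul_div, div_mul_eq_mul_div, ← add_div, div_eq_iff h3ab.ne']; ring] at hc1
  rw [show a/(3*a-b)*(a+b) + (2*a-b)/(3*a-b)*(4*a) = 3*a by rw [div_mul_eq_mul_div, div_mul_eq_mul_div, ← add_div, div_eq_iff h3ab.ne']; ring] at hc2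
  have hkey : (3*a) * Real.log (3*a) + (2*a+b) * Real.log (2*a+b)
      < (a+b) * Real.log (a+b) + (4*a) * Real.log (4*a) := by
    have hlin : (2*a-b)/(3*a-b) * ((a+b)*Real.log (a+b)) + a/(3*a-b) * ((4*a)*Real.log (4*a))
        + (a/(3*a-b) * ((a+b)*Real.log (a+b)) + (2*a-b)/(3*a-b) * ((4*a)*Real.log (4*a)))
        = (a+b)*Real.log (a+b) + (4*a)*Real.log (4*a) := by
      linear_combination ((a+b)*Real.log (a+b) + (4*a)*Real.log (4*a)) * htsum
    linarith [hc1, hc2]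
  have hlog2pos : (0:ℝ) < Real.log 2 := Real.log_pos (by norm_num)
  have key' : (3*a) * Real.logb 2 (3*a) + (2*a+b) * Real.logb 2 (2*a+b)
      < (a+b) * Real.logb 2 (a+b) + (4*a) * Real.logb 2 (4*a) := by
    simp only [Real.logb]
    rw [← mul_div_assoc, ← mul_div_assoc, ← mul_div_assoc, ← mul_div_assoc,
      ← add_div, ← add_div, div_lt_div_iff₀ hlog2pos hlog2pos]
    exact mul_lt_mul_of_pos_right hkey hlog2pos
  simp only [cmi, mi, hU₂, hU₁]
  rw [hX, hY, hXY, hU, hXU, hYU, hXYU]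
  refine ⟨?_, ?_, ?_⟩
  · rw [hlg2, hlg4]; ring
  · ring
  · rw [lt_min_iff]
    exact ⟨by linarith [key'], by linarith [key']⟩
end
end
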